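/- Let A be a nonempty proper subset of the vertices of the cycle C_n consisting of the currently totally dominated vertices. If A contains a run (a maximal set of at least two consecutive totally dominated vertices) or an anti-run (a maximal set of at least two consecutive non-totally-dominated vertices), then there exists a legal move (a vertex with at least one neighbor outside A) whose play totally dominates exactly one vertex not in A. If A contains neither a run nor an anti-run, then (A, V(C_n)∖A) is a bipartition of C_n into the two alternating classes, and every legal move totally dominates exactly two vertices not in A. -/

import Mathlib

open Finset

open scoped Classical

variable {V : Type*} [Fintype V]

/-- The set of neighbors of `v` (the vertices that `v` totally dominates). -/
noncomputable def nbr (G : SimpleGraph V) (v : V) : Finset V :=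
  Finset.univ.filter (G.Adj v)

/-- The legal moves, given that the vertices of `D` are already totally dominated:
a vertex is playable iff it totally dominates at least one vertex outside `D`. -/
noncomputable def movesF (G : SimpleGraph V) (D : Finset V) : Finset V :=
  Finset.univ.filter fun v => ¬ nbr G v ⊆ D

lemma movesF_card (G : SimpleGraph V) (D : Finset V) {v : V} (hv : v ∈ movesF G D) :
    ((univ : Finset V) \ (D ∪ nbr G v)).card < ((univ : Finset V) \ D).card := by
  simp only [movesF, mem_filter] at hv
  obtain ⟨u, hu, hu2⟩ := Finset.not_subset.mp hv.2
  apply Finset.card_lt_card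
  constructor
  · exact Finset.sdiff_subset_sdiff le_rfl Finset.subset_union_left
  · intro hsub
    have h1 : u ∈ (univ : Finset V) \ D := by simp [hu2]
    have h2 := hsub h1
    simp only [mem_sdiff, mem_univ, true_and, Finset.mem_union] at h2
    exact h2 (Or.inr hu)

/-- Optimal number of moves in the total domination game on `G` with the vertices of `D`
already totally dominated; `turn = true` means Dominator (the minimizer) moves next,
`turn = false` means Staller (the maximizer) moves next.  The game ends when no legal
move remains (for graphs without isolated vertices this means every vertex is totally
dominated). -/
noncomputable def gtVal (G : SimpleGraph V) (turn : Bool) (D : Finset V) : ℕ :=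
  if h : (movesF G D).Nonempty then
    if turn then
      1 + ((movesF G D).attach.inf' (by simpa using h)
        fun v => gtVal G false (D ∪ nbr G v.1))
    else
      1 + ((movesF G D).attach.sup' (by simpa using h)
        fun v => gtVal G true (D ∪ nbr G v.1))
  else 0
termination_by ((univ : Finset V) \ D).card
decreasing_by
  · exact movesF_card G D v.2
  · exact movesF_card G D v.2

/-- The game total domination number `γ_g^t(G|D)` (Dominator-start, `D` predominated). -/
noncomputable def gtD (G : SimpleGraph V) (D : Finset V := ∅) : ℕ := gtVal G true D

/-- The Staller-start game total domination number `γ_g^t'(G|D)`. -/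
noncomputable def gtS (G : SimpleGraph V) (D : Finset V := ∅) : ℕ := gtVal G false D

/-- `G` has no isolated vertices. -/
def NoIsolated (G : SimpleGraph V) : Prop := ∀ v : V, ∃ w, G.Adj v w

/-- The cycle graph `C_n` on vertex set `ZMod n` (a genuine cycle for `n ≥ 3`):
`x` is adjacent to `x + 1` and `x - 1`. -/
def cycleG (n : ℕ) : SimpleGraph (ZMod n) :=
  SimpleGraph.fromRel (fun x y => x + 1 = y)

lemma aux_one_ne_zero {n : ℕ} (hn3 : 3 ≤ n) : (1 : ZMod n) ≠ 0 := by
  haveI : NeZero n := ⟨by omega⟩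
  have : ((1 : ℕ) : ZMod n) ≠ 0 := by
    rw [Ne, ZMod.natCast_eq_zero_iff]
    intro h
    exact absurd (Nat.le_of_dvd one_pos h) (by omega)
  simpa using this

lemma aux_two_ne_zero {n : ℕ} (hn3 : 3 ≤ n) : (2 : ZMod n) ≠ 0 := by
  haveI : NeZero n := ⟨by omega⟩
  have : ((2 : ℕ) : ZMod n) ≠ 0 := by
    rw [Ne, ZMod.natCast_eq_zero_iff]
    intro h
    exact absurd (Nat.le_of_dvd two_pos h) (by omega)
  simpa using this

lemma nbr_cycle {n : ℕ} [NeZero n] (hn3 : 3 ≤ n) (v : ZMod n) :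
    nbr (cycleG n) v = {v + 1, v - 1} := by
  ext w
  rw [nbr, Finset.mem_filter]
  simp only [nbr, cycleG, mem_filter, mem_univ, true_and, SimpleGraph.fromRel_adj,
    mem_insert, mem_singleton]
  constructor
  · rintro ⟨-, h | h⟩
    · exact Or.inl h.symm
    · exact Or.inr (eq_sub_of_add_eq h)
  · rintro (rfl | rfl)
    · exact ⟨left_ne_add.mpr (aux_one_ne_zero hn3), Or.inl rfl⟩
    · refine ⟨?_, Or.inr (by ring)⟩
      intro h
      apply aux_one_ne_zero hn3
      have : v - (v - 1) = 0 := by rw [← h]; ring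
      simpa using this

lemma exists_boundary {n : ℕ} [NeZero n] (P : ZMod n → Prop) (x : ZMod n)
    (h0 : P x) (h1 : P (x + 1)) (hex : ∃ y, ¬ P y) :
    ∃ v : ZMod n, P (v - 1) ∧ ¬ P (v + 1) := by
  classical
  have hQ : ∃ j : ℕ, ¬ P (x + (j : ZMod n)) := by
    obtain ⟨y, hy⟩ := hex
    refine ⟨(y - x).val, ?_⟩
    rwa [ZMod.natCast_val, ZMod.cast_id, add_sub_cancel]
  let j₀ := Nat.find hQ
  have hj₀ : ¬ P (x + (j₀ : ZMod n)) := Nat.find_spec hQ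
  have hne0 : j₀ ≠ 0 := by
    intro h
    apply hj₀; rw [h]; simpa using h0
  have hne1 : j₀ ≠ 1 := by
    intro h
    apply hj₀; rw [h]; simpa using h1
  obtain ⟨k, hk⟩ : ∃ k, j₀ = k + 2 := ⟨j₀ - 2, by omega⟩
  have hmin : P (x + (k : ZMod n)) := by
    by_contra h
    have hle : j₀ ≤ k := Nat.find_le h
    omega
  refine ⟨x + (k : ZMod n) + 1, by simpa using hmin, ?_⟩
  have : x + ((j₀ : ℕ) : ZMod n) = x + (k : ZMod n) + 1 + 1 := by
    rw [hk]; push_cast; ring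
  rwa [this] at hj₀

/-- Let `A` be a nonempty proper subset of the vertices of the cycle
`C_n` (`n ≥ 3`), the currently totally dominated vertices.  If `A` contains a run (two
cyclically consecutive vertices in `A`) or an anti-run (two cyclically consecutive
vertices outside `A`), then there is a legal move (a vertex with a neighbor outside `A`)
totally dominating exactly one vertex not in `A`.  If `A` contains neither a run nor an
anti-run, then `A` and its complement alternate around the cycle (a bipartition), and
every legal move totally dominates exactly two vertices not in `A`. -/
theorem cycle_run_antirun (n : ℕ) [NeZero n] (hn3 : 3 ≤ n) (A : Finset (ZMod n))
    (hA : A.Nonempty) (hA' : A ≠ Finset.univ) :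
    (((∃ x : ZMod n, x ∈ A ∧ x + 1 ∈ A) ∨ (∃ x : ZMod n, x ∉ A ∧ x + 1 ∉ A)) →
      ∃ v : ZMod n, ¬ nbr (cycleG n) v ⊆ A ∧ (nbr (cycleG n) v \ A).card = 1) ∧
    ((¬ (∃ x : ZMod n, x ∈ A ∧ x + 1 ∈ A)) ∧ (¬ (∃ x : ZMod n, x ∉ A ∧ x + 1 ∉ A)) →
      (∀ x : ZMod n, x ∈ A ↔ x + 1 ∉ A) ∧
      (∀ v : ZMod n, ¬ nbr (cycleG n) v ⊆ A → (nbr (cycleG n) v \ A).card = 2)) := by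
  classical
  have hpm : ∀ v : ZMod n, v + 1 ≠ v - 1 := by
    intro v h
    refine aux_two_ne_zero hn3 ?_
    have h2 : (v + 1) - (v - 1) = 2 := by ring
    rw [h, sub_self] at h2
    exact h2.symm
  constructor
  · rintro (⟨x, hx, hx1⟩ | ⟨x, hx, hx1⟩)
    · -- run case
      obtain ⟨y, hy⟩ : ∃ y, y ∉ A := by
        by_contra h
        push_neg at h
        exact hA' (Finset.eq_univ_of_forall h)
      obtain ⟨v, hv1, hv2⟩ := exists_boundary (· ∈ A) x hx hx1 ⟨y, hy⟩
      refine ⟨v, ?_, ?_⟩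
      · rw [nbr_cycle hn3]
        intro h
        exact hv2 (h (by simp))
      · rw [nbr_cycle hn3]
        have : ({v + 1, v - 1} : Finset (ZMod n)) \ A = {v + 1} := by
          ext w
          simp only [mem_sdiff, mem_insert, mem_singleton]
          constructor
          · rintro ⟨rfl | rfl, hw⟩
            · rfl
            · exact absurd hv1 hw
          · rintro rfl; exact ⟨Or.inl rfl, hv2⟩
        rw [this, Finset.card_singleton]
    · -- anti-run case
      obtain ⟨y, hy⟩ := hA
      obtain ⟨v, hv1, hv2⟩ := exists_boundary (· ∉ A) x hx hx1 ⟨y, by simpa using hy⟩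
      simp only [not_not] at hv2
      refine ⟨v, ?_, ?_⟩
      · rw [nbr_cycle hn3]
        intro h
        exact hv1 (h (by simp))
      · rw [nbr_cycle hn3]
        have : ({v + 1, v - 1} : Finset (ZMod n)) \ A = {v - 1} := by
          ext w
          simp only [mem_sdiff, mem_insert, mem_singleton]
          constructor
          · rintro ⟨rfl | rfl, hw⟩
            · exact absurd hv2 hw
            · rfl
          · rintro rfl; exact ⟨Or.inr rfl, hv1⟩
        rw [this, Finset.card_singleton]
  · rintro ⟨hnr, hna⟩
    push_neg at hnr hna
    have halt : ∀ x : ZMod n, x ∈ A ↔ x + 1 ∉ A := by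
      intro x
      constructor
      · exact hnr x
      · intro h
        by_contra hx
        exact h (hna x hx)
    refine ⟨halt, ?_⟩
    intro v hv
    rw [nbr_cycle hn3] at hv ⊢
    obtain ⟨u, hu, hu2⟩ := Finset.not_subset.mp hv
    have hboth : v + 1 ∉ A ∧ v - 1 ∉ A := by
      have h1 : v - 1 ∈ A ↔ v ∉ A := by
        have := halt (v - 1)
        rwa [sub_add_cancel] at this
      have h2 : v ∈ A ↔ v + 1 ∉ A := halt v
      simp only [mem_insert, mem_singleton] at hu
      rcases hu with rfl | rfl
      · have hvA : v ∈ A := h2.mpr hu2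
        exact ⟨hu2, fun h => (h1.mp h) hvA⟩
      · have hvA : v ∈ A := by
          by_contra h
          exact hu2 (h1.mpr h)
        exact ⟨h2.mp hvA, hu2⟩
    have : ({v + 1, v - 1} : Finset (ZMod n)) \ A = {v + 1, v - 1} := by
      rw [Finset.sdiff_eq_self_iff_disjoint, Finset.disjoint_left]
      intro w hw
      simp only [mem_insert, mem_singleton] at hw
      rcases hw with rfl | rfl
      · exact hboth.1
      · exact hboth.2
    rw [this, Finset.card_insert_of_notMem (by simpa using hpm v), Finset.card_singleton]
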